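/- The CHSH correlator C = (1/√2)·[[1, 1],[1, −1]] has a unique PSD completion in E₄, namely the matrix Ĉ with unit diagonal, Ĉ₁₂ = Ĉ₃₄ = 0, and cross block (1/√2)·[[1, 1],[1, −1]]; moreover C is an extreme point of Cor(2,2). -/

import Mathlib

open Matrix Real
open scoped RealInnerProductSpace

/-- The set of quantum correlation matrices (Tsirelson): `n × m` real matrices whose entries
are inner products of unit vectors in `ℝ^{n+m}`. -/
def Cor (n m : ℕ) : Set (Matrix (Fin n) (Fin m) ℝ) :=
  {C | ∃ u : Fin n → EuclideanSpace ℝ (Fin (n + m)),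
       ∃ v : Fin m → EuclideanSpace ℝ (Fin (n + m)),
       (∀ x, ‖u x‖ = 1) ∧ (∀ y, ‖v y‖ = 1) ∧
       ∀ x y, C x y = ⟪u x, v y⟫}

/-- The elliptope: PSD matrices with unit diagonal. -/
def Elliptope (k : ℕ) : Set (Matrix (Fin k) (Fin k) ℝ) :=
  {X | X.PosSemidef ∧ ∀ i, X i i = 1}

/-- `X` is a PSD completion of `C`. -/
def IsPSDCompletion (n m : ℕ) (X : Matrix (Fin (n + m)) (Fin (n + m)) ℝ)
    (C : Matrix (Fin n) (Fin m) ℝ) : Prop :=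
  X ∈ Elliptope (n + m) ∧ ∀ x y, X (Fin.castAdd m x) (Fin.natAdd n y) = C x y

/-- `C` is an extreme point of the convex set `S`. -/
def IsExtremePt {E : Type*} [AddCommMonoid E] [Module ℝ E] (S : Set E) (C : E) : Prop :=
  C ∈ S ∧ ∀ C₁ ∈ S, ∀ C₂ ∈ S, ∀ l : ℝ, 0 < l → l < 1 →
    C = l • C₁ + (1 - l) • C₂ → C₁ = C ∧ C₂ = C

/-- `X ∈ E₄` is a PSD completion of the `2 × 2` matrix `C`. -/
def IsPSDCompletion22 (X : Matrix (Fin 4) (Fin 4) ℝ)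
    (C : Matrix (Fin 2) (Fin 2) ℝ) : Prop :=
  X.PosSemidef ∧ (∀ i, X i i = 1) ∧
  X 0 2 = C 0 0 ∧ X 0 3 = C 0 1 ∧ X 1 2 = C 1 0 ∧ X 1 3 = C 1 1

/-- The CHSH correlator. -/
noncomputable def CHSH : Matrix (Fin 2) (Fin 2) ℝ :=
  (1 / Real.sqrt 2) • !![1, 1; 1, -1]

/-- Its unique PSD completion. -/
noncomputable def CHSHhat : Matrix (Fin 4) (Fin 4) ℝ :=
  !![1, 0, 1 / Real.sqrt 2, 1 / Real.sqrt 2;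
     0, 1, 1 / Real.sqrt 2, -(1 / Real.sqrt 2);
     1 / Real.sqrt 2, 1 / Real.sqrt 2, 1, 0;
     1 / Real.sqrt 2, -(1 / Real.sqrt 2), 0, 1]

/-! ### Auxiliary facts -/

set_option linter.unreachableTactic false
set_option linter.unusedTactic false

lemma hr2 : Real.sqrt 2 * Real.sqrt 2 = 2 := Real.mul_self_sqrt (by norm_num)
lemma hrpos : (0:ℝ) < Real.sqrt 2 := Real.sqrt_pos.mpr (by norm_num)

lemma chsh00 : CHSH 0 0 = 1 / Real.sqrt 2 := by norm_num [CHSH]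
lemma chsh01 : CHSH 0 1 = 1 / Real.sqrt 2 := by norm_num [CHSH]
lemma chsh10 : CHSH 1 0 = 1 / Real.sqrt 2 := by norm_num [CHSH]
lemma chsh11 : CHSH 1 1 = -(1 / Real.sqrt 2) := by norm_num [CHSH]

lemma CHSHhat_psd : CHSHhat.PosSemidef := by
  have hfac : CHSHhat =
      (!![1, 0; 0, 1; 1/Real.sqrt 2, 1/Real.sqrt 2; 1/Real.sqrt 2, -(1/Real.sqrt 2)] :
        Matrix (Fin 4) (Fin 2) ℝ) *
      (!![1, 0; 0, 1; 1/Real.sqrt 2, 1/Real.sqrt 2; 1/Real.sqrt 2, -(1/Real.sqrt 2)] :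
        Matrix (Fin 4) (Fin 2) ℝ)ᴴ := by
    ext i j
    fin_cases i <;> fin_cases j <;>
      simp only [Matrix.mul_apply, Matrix.conjTranspose_apply, Fin.sum_univ_two, star_trivial]
    all_goals norm_num [CHSHhat]
    all_goals try field_simp
    all_goals nlinarith [hr2, hrpos]
  rw [hfac]
  exact Matrix.posSemidef_self_mul_conjTranspose _

/-- A PSD matrix with unit diagonal killing the two kernel vectors of `CHSHhat`
must equal `CHSHhat`. -/
lemma kernel_uniq {Y : Matrix (Fin 4) (Fin 4) ℝ} (hH : Y.IsHermitian)
    (hdg : ∀ i, Y i i = 1)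
    (h1 : Y *ᵥ ![-Real.sqrt 2, 0, 1, 1] = 0)
    (h2 : Y *ᵥ ![0, -Real.sqrt 2, 1, -1] = 0) : Y = CHSHhat := by
  have s01 : Y 1 0 = Y 0 1 := by simpa using hH.apply 0 1
  have s02 : Y 2 0 = Y 0 2 := by simpa using hH.apply 0 2
  have s03 : Y 3 0 = Y 0 3 := by simpa using hH.apply 0 3
  have s12 : Y 2 1 = Y 1 2 := by simpa using hH.apply 1 2
  have s13 : Y 3 1 = Y 1 3 := by simpa using hH.apply 1 3
  have s23 : Y 3 2 = Y 2 3 := by simpa using hH.apply 2 3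
  have E10 := congrFun h1 0
  have E11 := congrFun h1 1
  have E12 := congrFun h1 2
  have E13 := congrFun h1 3
  have E20 := congrFun h2 0
  have E21 := congrFun h2 1
  have E22 := congrFun h2 2
  have E23 := congrFun h2 3
  simp [Matrix.mulVec, dotProduct, Fin.sum_univ_four, hdg, s01, s02, s03, s12, s13, s23]
    at E10 E11 E12 E13 E20 E21 E22 E23
  have hrb : Real.sqrt 2 * Y 0 2 = 1 := by
    linear_combination (Real.sqrt 2/2) * E10 - (1/2) * E12 + (1/2) * E13 + (1/2) * hr2
  have hrc : Real.sqrt 2 * Y 0 3 = 1 := by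
    linear_combination (Real.sqrt 2/2) * E10 + (1/2) * E12 - (1/2) * E13 + (1/2) * hr2
  have hrd : Real.sqrt 2 * Y 1 2 = 1 := by
    linear_combination (Real.sqrt 2/2) * E21 - (1/2) * E22 - (1/2) * E23 + (1/2) * hr2
  have hre : Real.sqrt 2 * Y 1 3 = -1 := by
    linear_combination (-(Real.sqrt 2)/2) * E21 - (1/2) * E22 - (1/2) * E23 - (1/2) * hr2
  have hf : Y 2 3 = 0 := by linear_combination E12 + hrb
  have ha : Y 0 1 = 0 := by
    have h2a : (2:ℝ) * Y 0 1 = 0 := by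
      linear_combination (-Real.sqrt 2) * E20 + hrb - hrc - Y 0 1 * hr2
    linarith
  have hb : Y 0 2 = 1 / Real.sqrt 2 := by
    rw [eq_div_iff hrpos.ne']; linear_combination hrb
  have hc : Y 0 3 = 1 / Real.sqrt 2 := by
    rw [eq_div_iff hrpos.ne']; linear_combination hrc
  have hd12 : Y 1 2 = 1 / Real.sqrt 2 := by
    rw [eq_div_iff hrpos.ne']; linear_combination hrd
  have hd13 : Y 1 3 = -(1 / Real.sqrt 2) := by
    have hne := hrpos.ne'
    field_simp
    linear_combination hre
  ext i j
  fin_cases i <;> fin_cases j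
  exacts [hdg _, ha, hb, hc, s01.trans ha, hdg _, hd12, hd13, s02.trans hb,
    s12.trans hd12, hdg _, hf, s03.trans hc, s13.trans hd13, s23.trans hf, hdg _]

/-- Any PSD completion of `CHSH` kills the two kernel vectors of `CHSHhat`. -/
lemma completion_quad {X : Matrix (Fin 4) (Fin 4) ℝ} (h : IsPSDCompletion22 X CHSH) :
    X *ᵥ ![-Real.sqrt 2, 0, 1, 1] = 0 ∧ X *ᵥ ![0, -Real.sqrt 2, 1, -1] = 0 := by
  obtain ⟨hpsd, hdg, h02, h03, h12, h13⟩ := h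
  rw [chsh00] at h02; rw [chsh01] at h03; rw [chsh10] at h12; rw [chsh11] at h13
  have s02 : X 2 0 = X 0 2 := by simpa using hpsd.1.apply 0 2
  have s03 : X 3 0 = X 0 3 := by simpa using hpsd.1.apply 0 3
  have s12 : X 2 1 = X 1 2 := by simpa using hpsd.1.apply 1 2
  have s13 : X 3 1 = X 1 3 := by simpa using hpsd.1.apply 1 3
  have s23 : X 3 2 = X 2 3 := by simpa using hpsd.1.apply 2 3
  have q1 := hpsd.dotProduct_mulVec_nonneg ![-Real.sqrt 2, 0, 1, 1]
  have q2 := hpsd.dotProduct_mulVec_nonneg ![0, -Real.sqrt 2, 1, -1]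
  simp [Matrix.mulVec, dotProduct, Fin.sum_univ_four, hdg, s02, s03, s12, s13, s23,
    h02, h03, h12, h13] at q1 q2
  have hkey2 : Real.sqrt 2 * (-Real.sqrt 2 + (Real.sqrt 2)⁻¹ + (Real.sqrt 2)⁻¹) = 0 := by
    have h := hrpos.ne'
    field_simp
    linarith [hr2, Real.sq_sqrt (by norm_num : (0:ℝ) ≤ 2)]
  have hkeyE : -Real.sqrt 2 + (Real.sqrt 2)⁻¹ + (Real.sqrt 2)⁻¹ = 0 := by
    have h := hrpos.ne'
    field_simp
    linarith [hr2, Real.sq_sqrt (by norm_num : (0:ℝ) ≤ 2)]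
  have h23 : X 2 3 = 0 := by linarith [q1, q2, hkey2]
  constructor
  · rw [← hpsd.dotProduct_mulVec_zero_iff]
    simp [Matrix.mulVec, dotProduct, Fin.sum_univ_four, hdg, s02, s03, s12, s13, s23,
      h02, h03, h12, h13, h23]
    linarith [hkey2, hkeyE]
  · rw [← hpsd.dotProduct_mulVec_zero_iff]
    simp [Matrix.mulVec, dotProduct, Fin.sum_univ_four, hdg, s02, s03, s12, s13, s23,
      h02, h03, h12, h13, h23]
    linarith [hkey2, hkeyE]

lemma CHSHhat_completion : IsPSDCompletion22 CHSHhat CHSH := by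
  refine ⟨CHSHhat_psd, ?_, chsh00.symm, chsh01.symm, chsh10.symm, chsh11.symm⟩
  intro i
  fin_cases i <;> norm_num [CHSHhat]

lemma completion_uniq {X : Matrix (Fin 4) (Fin 4) ℝ} (h : IsPSDCompletion22 X CHSH) :
    X = CHSHhat := by
  obtain ⟨k1, k2⟩ := completion_quad h
  exact kernel_uniq h.1.1 h.2.1 k1 k2

lemma gram_psd (w : Fin 4 → EuclideanSpace ℝ (Fin 4)) :
    (Matrix.of fun i j => (⟪w i, w j⟫ : ℝ)).PosSemidef := by
  have hfac : (Matrix.of fun i j => (⟪w i, w j⟫ : ℝ)) =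
      (Matrix.of fun k i => w i k)ᴴ * (Matrix.of fun k i => w i k) := by
    ext i j
    simp [Matrix.mul_apply, Matrix.conjTranspose_apply, PiLp.inner_apply, RCLike.inner_apply]
    exact Finset.sum_congr rfl fun _ _ => mul_comm _ _
  rw [hfac]
  exact Matrix.posSemidef_conjTranspose_mul_self _

lemma inner_self_one (z : EuclideanSpace ℝ (Fin 4)) (h : ‖z‖ = 1) : (⟪z, z⟫ : ℝ) = 1 := by
  rw [real_inner_self_eq_norm_mul_norm, h]; norm_num

lemma norm_one_of_inner_one (z : EuclideanSpace ℝ (Fin 4)) (h : (⟪z, z⟫ : ℝ) = 1) :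
    ‖z‖ = 1 := by
  have h2 := real_inner_self_eq_norm_mul_norm z
  nlinarith [norm_nonneg z]

noncomputable def eVec (f : Fin 4 → ℝ) : EuclideanSpace ℝ (Fin 4) :=
  (WithLp.equiv 2 (Fin 4 → ℝ)).symm f

lemma CHSH_mem : CHSH ∈ Cor 2 2 := by
  refine ⟨![eVec ![1,0,0,0], eVec ![0,1,0,0]],
          ![eVec ![1/Real.sqrt 2, 1/Real.sqrt 2, 0, 0],
            eVec ![1/Real.sqrt 2, -(1/Real.sqrt 2), 0, 0]], ?_, ?_, ?_⟩
  · intro x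
    fin_cases x <;>
      [ exact norm_one_of_inner_one _ (by
          simp [eVec, PiLp.inner_apply, RCLike.inner_apply, Fin.sum_univ_four, -inner_self_eq_norm_sq_to_K]);
        exact norm_one_of_inner_one _ (by
          simp [eVec, PiLp.inner_apply, RCLike.inner_apply, Fin.sum_univ_four, -inner_self_eq_norm_sq_to_K])]
  · intro y
    fin_cases y <;>
      refine norm_one_of_inner_one _ ?_ <;>
      simp [eVec, PiLp.inner_apply, RCLike.inner_apply, Fin.sum_univ_four, -inner_self_eq_norm_sq_to_K] <;>
      (have h := hrpos.ne'; field_simp; norm_num [Real.sq_sqrt])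
  · intro x y
    fin_cases x <;> fin_cases y <;>
      simp [CHSH, eVec, PiLp.inner_apply, RCLike.inner_apply, Fin.sum_univ_four]

lemma gram_exists {C : Matrix (Fin 2) (Fin 2) ℝ} (h : C ∈ Cor 2 2) :
    ∃ G, IsPSDCompletion22 G C := by
  obtain ⟨u, v, hu, hv, hC⟩ := h
  refine ⟨Matrix.of fun i j => ⟪![u 0, u 1, v 0, v 1] i, ![u 0, u 1, v 0, v 1] j⟫,
    gram_psd _, ?_, (hC 0 0).symm, (hC 0 1).symm, (hC 1 0).symm, (hC 1 1).symm⟩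
  intro i
  fin_cases i
  exacts [inner_self_one _ (hu 0), inner_self_one _ (hu 1),
    inner_self_one _ (hv 0), inner_self_one _ (hv 1)]

lemma C_eq_of_G {C : Matrix (Fin 2) (Fin 2) ℝ} {G : Matrix (Fin 4) (Fin 4) ℝ}
    (hG : IsPSDCompletion22 G C) (hGeq : G = CHSHhat) : C = CHSH := by
  obtain ⟨-, -, e02, e03, e12, e13⟩ := hG
  have g02 := congrFun (congrFun hGeq 0) 2
  have g03 := congrFun (congrFun hGeq 0) 3
  have g12 := congrFun (congrFun hGeq 1) 2
  have g13 := congrFun (congrFun hGeq 1) 3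
  ext x y
  fin_cases x <;> fin_cases y
  exacts [e02.symm.trans (g02.trans chsh00.symm),
    e03.symm.trans (g03.trans chsh01.symm),
    e12.symm.trans (g12.trans chsh10.symm),
    e13.symm.trans (g13.trans chsh11.symm)]

lemma factor_eq {A B : Matrix (Fin 4) (Fin 4) ℝ} (hA : A.PosSemidef) (hAd : ∀ i, A i i = 1)
    (hB : B.PosSemidef) {l : ℝ} (hl0 : 0 < l) (hl1 : l < 1)
    (hsum : l • A + (1 - l) • B = CHSHhat) : A = CHSHhat := by
  obtain ⟨k1, k2⟩ := completion_quad CHSHhat_completion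
  have main : ∀ x : Fin 4 → ℝ, CHSHhat *ᵥ x = 0 → A *ᵥ x = 0 := by
    intro x hx
    have h0 : star x ⬝ᵥ (l • A + (1 - l) • B) *ᵥ x = 0 := by
      rw [hsum, hx, dotProduct_zero]
    simp only [Matrix.add_mulVec, Matrix.smul_mulVec, dotProduct_add,
      dotProduct_smul, smul_eq_mul] at h0
    have hqa := hA.dotProduct_mulVec_nonneg x
    have hqb := hB.dotProduct_mulVec_nonneg x
    have hla : l * (star x ⬝ᵥ A *ᵥ x) = 0 := by
      nlinarith [mul_nonneg hl0.le hqa, mul_nonneg (by linarith : (0:ℝ) ≤ 1 - l) hqb]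
    have hqa0 : star x ⬝ᵥ A *ᵥ x = 0 := (mul_eq_zero.mp hla).resolve_left hl0.ne'
    exact (hA.dotProduct_mulVec_zero_iff x).mp hqa0
  exact kernel_uniq hA.1 hAd (main _ k1) (main _ k2)

theorem stmt16 :
    IsPSDCompletion22 CHSHhat CHSH ∧
    (∀ X, IsPSDCompletion22 X CHSH → X = CHSHhat) ∧
    IsExtremePt (Cor 2 2) CHSH := by
  refine ⟨CHSHhat_completion, fun X hX => completion_uniq hX, CHSH_mem, ?_⟩
  intro C₁ hC₁ C₂ hC₂ l hl0 hl1 heq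
  obtain ⟨G₁, hG₁⟩ := gram_exists hC₁
  obtain ⟨G₂, hG₂⟩ := gram_exists hC₂
  have hGsum : IsPSDCompletion22 (l • G₁ + (1 - l) • G₂) CHSH := by
    refine ⟨Matrix.PosSemidef.of_dotProduct_mulVec_nonneg ?_ ?_, ?_, ?_, ?_, ?_, ?_⟩
    · show (l • G₁ + (1 - l) • G₂)ᴴ = _
      have t1 : G₁ᵀ = G₁ := by simpa using hG₁.1.1.eq
      have t2 : G₂ᵀ = G₂ := by simpa using hG₂.1.1.eq
      simp [Matrix.conjTranspose_add, Matrix.conjTranspose_smul, t1, t2]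
    · intro x
      simp only [Matrix.add_mulVec, Matrix.smul_mulVec, dotProduct_add,
        dotProduct_smul, smul_eq_mul]
      exact add_nonneg (mul_nonneg hl0.le (hG₁.1.dotProduct_mulVec_nonneg x))
        (mul_nonneg (by linarith) (hG₂.1.dotProduct_mulVec_nonneg x))
    · intro i
      simp only [Matrix.add_apply, Matrix.smul_apply, hG₁.2.1 i, hG₂.2.1 i, smul_eq_mul]
      ring
    · have h := congrFun (congrFun heq 0) 0
      simp only [Matrix.add_apply, Matrix.smul_apply, hG₁.2.2.1, hG₂.2.2.1, smul_eq_mul]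
      simpa [Matrix.add_apply, Matrix.smul_apply, smul_eq_mul] using h.symm
    · have h := congrFun (congrFun heq 0) 1
      simp only [Matrix.add_apply, Matrix.smul_apply, hG₁.2.2.2.1, hG₂.2.2.2.1, smul_eq_mul]
      simpa [Matrix.add_apply, Matrix.smul_apply, smul_eq_mul] using h.symm
    · have h := congrFun (congrFun heq 1) 0
      simp only [Matrix.add_apply, Matrix.smul_apply, hG₁.2.2.2.2.1, hG₂.2.2.2.2.1, smul_eq_mul]
      simpa [Matrix.add_apply, Matrix.smul_apply, smul_eq_mul] using h.symm
    · have h := congrFun (congrFun heq 1) 1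
      simp only [Matrix.add_apply, Matrix.smul_apply, hG₁.2.2.2.2.2, hG₂.2.2.2.2.2, smul_eq_mul]
      simpa [Matrix.add_apply, Matrix.smul_apply, smul_eq_mul] using h.symm
  have hXeq : l • G₁ + (1 - l) • G₂ = CHSHhat := completion_uniq hGsum
  have hG1eq : G₁ = CHSHhat := factor_eq hG₁.1 hG₁.2.1 hG₂.1 hl0 hl1 hXeq
  have hXeq' : (1 - l) • G₂ + (1 - (1 - l)) • G₁ = CHSHhat := by
    rw [show (1:ℝ) - (1 - l) = l by ring, add_comm]; exact hXeq
  have hG2eq : G₂ = CHSHhat :=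
    factor_eq hG₂.1 hG₂.2.1 hG₁.1 (by linarith) (by linarith) hXeq'
  exact ⟨C_eq_of_G hG₁ hG1eq, C_eq_of_G hG₂ hG2eq⟩
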